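/- Let v₁ be a valuation on a field K and v₂ a valuation on the residue field Kv₁, and let v = v₂ ∘ v₁ be the composed valuation on K (whose valuation ring is the preimage in O_{v₁} of O_{v₂}). If both v₁ and v₂ are n≤-henselian, then v is n≤-henselian. -/

import Mathlib

set_option maxHeartbeats 1000000


/-- A valued field `(K, O)` is `n≤`-henselian if every monic polynomial over `O` of degree
at most `n` whose reduction has a simple zero in the residue field admits a root in `O`
lifting that zero. -/
def NLeHenselian (n : ℕ) {K : Type*} [Field K] (O : ValuationSubring K) : Prop :=
  ∀ f : Polynomial O, f.Monic → f.natDegree ≤ n →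
    ∀ a : IsLocalRing.ResidueField O,
      (f.map (IsLocalRing.residue O)).IsRoot a →
      ¬ (Polynomial.derivative (f.map (IsLocalRing.residue O))).IsRoot a →
      ∃ x : O, f.IsRoot x ∧ IsLocalRing.residue O x = a

/-- Evaluating a mapped polynomial at a mapped point. -/
theorem nLeHenselian_comp_key {A B : Type*} [CommRing A] [CommRing B] (h : A →+* B)
    (p : Polynomial A) (x : A) : (p.map h).eval (h x) = h (p.eval x) := by
  rw [Polynomial.eval_map, Polynomial.eval₂_at_apply]

/-- if `v₁` is a valuation on `K` and `v₂` a valuation on its residue field,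
and `v` is the composed valuation (whose valuation ring is the preimage in `O_{v₁}` of
`O_{v₂}` under the residue map), then `v` is `n≤`-henselian whenever both `v₁` and `v₂`
are. -/
theorem nLeHenselian_comp (n : ℕ) {K : Type*} [Field K]
    (v₁ : ValuationSubring K)
    (v₂ : ValuationSubring (IsLocalRing.ResidueField v₁))
    (v : ValuationSubring K)
    (hcomp : ∀ x : K, x ∈ v ↔ ∃ h : x ∈ v₁, IsLocalRing.residue v₁ ⟨x, h⟩ ∈ v₂)
    (h₁ : NLeHenselian n v₁) (h₂ : NLeHenselian n v₂) :
    NLeHenselian n v := by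
  classical
  -- inclusion of v into v₁
  have hle : v.toSubring ≤ v₁.toSubring := fun x hx => ((hcomp x).1 hx).choose
  let j : ↥v →+* ↥v₁ := Subring.inclusion hle
  have hjinj : Function.Injective j := fun a b hab => Subtype.ext (congrArg (Subtype.val (p := (· ∈ v₁.toSubring))) hab)
  -- the restricted residue map ρ : v →+* Kv₁
  let ρ : ↥v →+* IsLocalRing.ResidueField v₁ := (IsLocalRing.residue v₁).comp j
  have hρ : ∀ x : ↥v, ρ x ∈ v₂ := fun x => ((hcomp x.1).1 x.2).choose_spec
  let φ : ↥v →+* ↥v₂ := ρ.codRestrict v₂.toSubring hρ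
  let ψ : ↥v →+* IsLocalRing.ResidueField v₂ := (IsLocalRing.residue v₂).comp φ
  -- φ is surjective
  have hφsurj : Function.Surjective φ := by
    rintro ⟨z, hz⟩
    obtain ⟨w, hw⟩ := Ideal.Quotient.mk_surjective (I := IsLocalRing.maximalIdeal v₁) z
    have hwres : IsLocalRing.residue ↥v₁ w = z := hw
    have hwv : (w : K) ∈ v := (hcomp w.1).2 ⟨w.2, by
      rw [Subtype.coe_eta, hwres]; exact hz⟩
    refine ⟨⟨w.1, hwv⟩, Subtype.ext ?_⟩
    show ρ ⟨w.1, hwv⟩ = z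
    show IsLocalRing.residue ↥v₁ (j ⟨w.1, hwv⟩) = z
    rw [show j ⟨w.1, hwv⟩ = w from Subtype.ext rfl, hwres]
  have hψsurj : Function.Surjective ψ :=
    (IsLocalRing.residue_surjective).comp hφsurj
  -- kernel of ψ is the maximal ideal of v
  have hker : RingHom.ker ψ = IsLocalRing.maximalIdeal ↥v :=
    IsLocalRing.eq_maximalIdeal (RingHom.ker_isMaximal_of_surjective ψ hψsurj)
  -- the induced isomorphism of residue fields
  let e : IsLocalRing.ResidueField ↥v ≃+* IsLocalRing.ResidueField ↥v₂ :=
    (Ideal.quotEquivOfEq hker.symm).trans (RingHom.quotientKerEquivOfSurjective hψsurj)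
  have he : ∀ x : ↥v, e (IsLocalRing.residue ↥v x) = ψ x := fun x => by
    show (RingHom.quotientKerEquivOfSurjective hψsurj)
      ((Ideal.quotEquivOfEq hker.symm) (Ideal.Quotient.mk _ x)) = ψ x
    rw [Ideal.quotEquivOfEq_mk]
    simp [RingHom.quotientKerEquivOfSurjective, RingHom.quotientKerEquivOfRightInverse,
      RingHom.kerLift_mk]
    exact RingHom.kerLift_mk ψ x
  -- begin main argument
  intro f hf hdeg a ha ha'
  -- the polynomial over v₂
  let g : Polynomial ↥v₂ := f.map φ
  have hgred : g.map (IsLocalRing.residue ↥v₂)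
      = (f.map (IsLocalRing.residue ↥v)).map e.toRingHom := by
    rw [Polynomial.map_map, Polynomial.map_map]
    exact congrArg (fun h : ↥v →+* IsLocalRing.ResidueField ↥v₂ => Polynomial.map h f)
      (RingHom.ext fun x => (he x).symm).symm
  have hga : (g.map (IsLocalRing.residue ↥v₂)).IsRoot (e a) := by
    rw [hgred]
    show Polynomial.eval (e.toRingHom a) _ = 0
    rw [nLeHenselian_comp_key, show Polynomial.eval a (f.map (IsLocalRing.residue ↥v)) = 0
      from ha, map_zero]
  have hga' : ¬ (Polynomial.derivative (g.map (IsLocalRing.residue ↥v₂))).IsRoot (e a) := by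
    rw [hgred, Polynomial.derivative_map]
    intro h
    apply ha'
    have h' : e.toRingHom (Polynomial.eval a
        (Polynomial.derivative (f.map (IsLocalRing.residue ↥v)))) = 0 := by
      rw [← nLeHenselian_comp_key]; exact h
    exact e.injective (by simpa using h')
  obtain ⟨y, hy, hya⟩ := h₂ g (hf.map φ) (le_trans Polynomial.natDegree_map_le hdeg)
    (e a) hga hga'
  -- the polynomial over v₁
  let f₁ : Polynomial ↥v₁ := f.map j
  have hf₁red : f₁.map (IsLocalRing.residue ↥v₁) = g.map v₂.subtype := by
    rw [Polynomial.map_map, Polynomial.map_map]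
    rfl
  have hroot₁ : (f₁.map (IsLocalRing.residue ↥v₁)).IsRoot (y : IsLocalRing.ResidueField ↥v₁) := by
    rw [hf₁red]
    show Polynomial.eval (v₂.subtype y) _ = 0
    rw [nLeHenselian_comp_key, show Polynomial.eval y g = 0 from hy, map_zero]
  have hroot₁' : ¬ (Polynomial.derivative
      (f₁.map (IsLocalRing.residue ↥v₁))).IsRoot (y : IsLocalRing.ResidueField ↥v₁) := by
    rw [hf₁red, Polynomial.derivative_map]
    intro h
    have h0 : (Polynomial.derivative g).eval y = 0 := by
      apply Subtype.coe_injective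
      have h' : Polynomial.eval (v₂.subtype y) ((Polynomial.derivative g).map v₂.subtype) = 0 := h
      rw [nLeHenselian_comp_key] at h'
      exact h'
    apply hga'
    show Polynomial.eval (e a) (Polynomial.derivative (g.map (IsLocalRing.residue ↥v₂))) = 0
    rw [Polynomial.derivative_map, ← hya, nLeHenselian_comp_key, h0, map_zero]
  obtain ⟨x, hx, hxy⟩ := h₁ f₁ (hf.map j) (le_trans Polynomial.natDegree_map_le hdeg)
    (y : IsLocalRing.ResidueField ↥v₁) hroot₁ hroot₁'
  -- x lies in v
  have hxv : (x : K) ∈ v := (hcomp x.1).2 ⟨x.2, by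
    rw [Subtype.coe_eta, hxy]; exact y.2⟩
  have hj : j ⟨x.1, hxv⟩ = x := Subtype.ext rfl
  refine ⟨⟨x.1, hxv⟩, ?_, ?_⟩
  · -- root of f
    apply hjinj
    rw [map_zero, ← nLeHenselian_comp_key j f, hj]
    exact hx
  · -- residue is a
    apply e.injective
    rw [he]
    have hφx : φ ⟨x.1, hxv⟩ = y := by
      apply Subtype.ext
      show ρ ⟨x.1, hxv⟩ = (y : IsLocalRing.ResidueField ↥v₁)
      show IsLocalRing.residue ↥v₁ (j ⟨x.1, hxv⟩) = _
      rw [hj, hxy]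
    show IsLocalRing.residue ↥v₂ (φ ⟨x.1, hxv⟩) = e a
    rw [hφx, hya]
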